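/- Let $K$ be a commutative $\mathbb{Q}$-algebra. For each $n \ge 0$, write $\lg_n(x) = \frac{1}{n!}(\log(1-x))^n \in K[[x]]$. Define a composition product $\circ$ on $K[[x]]$ by $H \circ H' = a_0 H(0) + \sum_{i \ge 1} (-1)^i a_i (\partial^{i-1} H)(x, x, \dots, x)$ where $H' = \sum_{i \ge 0} a_i x^i$ and $\partial$ is the partial derivative with respect to the multiplicative formal group law $x * y = x + y - xy$. Then the power series $\lg_n(x)$ are orthogonal idempotents: $\lg_n \circ \lg_m = \delta_{n,m} \lg_n$, and moreover $1 - x = \sum_{r \ge 0} \lg_r(x)$. -/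

import Mathlib

variable {K : Type*} [CommRing K] [Algebra ℚ K]

/-- Substitution of a multivariate power series with vanishing constant term into a
one-variable power series. -/
noncomputable def psubst {σ : Type*} (f : MvPowerSeries σ K) (G : PowerSeries K) :
    MvPowerSeries σ K :=
  fun d => ∑ n ∈ Finset.range ((d.sum fun _ e => e) + 1),
    PowerSeries.coeff n G * MvPowerSeries.coeff d (f ^ n)

/-- The iterated partial derivative `∂^{m-1} G` (with respect to the multiplicative formal
group law `x * y = x + y - xy`) of a one-variable power series, a power series in `m`
variables:  `(∂^{m-1} G)(x₁,…,x_m) = ∑_{I ⊆ {1,…,m}} (-1)^{m - |I|} G(x_I)`, where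
`x_I = 1 - ∏_{i ∈ I} (1 - x_i)` is the `*`-sum of the variables `x_i`, `i ∈ I`. -/
noncomputable def partialDeriv (m : ℕ) (G : PowerSeries K) : MvPowerSeries (Fin m) K :=
  ∑ I : Finset (Fin m),
    ((-1 : ℤ) ^ (m + I.card)) • psubst (1 - ∏ i ∈ I, (1 - MvPowerSeries.X i)) G

/-- The diagonal evaluation `(∂^{i-1} H)(x,…,x)` (all `i` variables set equal to `x`) of the
iterated partial derivative with respect to the multiplicative formal group law; on the
diagonal the `*`-sum of `|I|` copies of `x` is `1 - (1-x)^{|I|}`. -/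
noncomputable def diagPartialDeriv (i : ℕ) (H : PowerSeries K) : PowerSeries K :=
  ∑ I : Finset (Fin i),
    ((-1 : ℤ) ^ (i + I.card)) • psubst (1 - (1 - PowerSeries.X) ^ I.card) H

/-- The composition product `H ∘ H' = a₀ H(0) + ∑_{i≥1} (-1)^i aᵢ (∂^{i-1}H)(x,…,x)` where
`H' = ∑ aᵢ xⁱ`; its `n`-th coefficient involves only the terms with `i ≤ n + 1` since
`(∂^{i-1}H)(x,…,x)` is divisible by `xⁱ`. -/
noncomputable def compose (H H' : PowerSeries K) : PowerSeries K :=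
  PowerSeries.C (PowerSeries.coeff 0 H' * PowerSeries.constantCoeff H)
  + PowerSeries.mk fun n =>
      ∑ i ∈ Finset.range (n + 1),
        ((-1 : ℤ) ^ (i + 1)) •
          (PowerSeries.coeff (i + 1) H'
            * PowerSeries.coeff n (diagPartialDeriv (i + 1) H))

/-- The formal power series `log(1-x) = -∑_{i≥1} xⁱ/i`. -/
noncomputable def logOneSub : PowerSeries K :=
  PowerSeries.mk fun i => if i = 0 then 0 else algebraMap ℚ K (-(1 / (i : ℚ)))

/-- `lg_n(x) = (1/n!) (log(1-x))^n`. -/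
noncomputable def lg (n : ℕ) : PowerSeries K :=
  ((n.factorial : ℚ)⁻¹) • (logOneSub (K := K)) ^ n

section Aux
set_option linter.unusedSectionVars false
set_option maxHeartbeats 1000000
open PowerSeries

theorem coeff_psubst (f G : PowerSeries K) (n : ℕ) :
    coeff n (psubst f G) = ∑ j ∈ Finset.range (n + 1), coeff j G * coeff n (f ^ j) := by
  show psubst f G (Finsupp.single () n) = _
  unfold psubst
  rw [Finsupp.sum_single_index] <;> rfl

theorem coeff_pow_eq_zero {f : PowerSeries K} (hf : constantCoeff f = 0) {n j : ℕ}
    (h : n < j) : coeff n (f ^ j) = 0 := by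
  have : (X : K⟦X⟧) ^ j ∣ f ^ j := pow_dvd_pow_of_dvd (X_dvd_iff.mpr hf) j
  exact (X_pow_dvd_iff.mp this) n h

theorem coeff_psubst' {f : PowerSeries K} (hf : constantCoeff f = 0) (G : PowerSeries K)
    {n N : ℕ} (h : n < N) :
    coeff n (psubst f G) = ∑ j ∈ Finset.range N, coeff j G * coeff n (f ^ j) := by
  rw [coeff_psubst]
  apply Finset.sum_subset
  · intro j hj; simp only [Finset.mem_range] at *; omega
  · intro j hj hj2
    simp only [Finset.mem_range, not_lt] at *
    rw [coeff_pow_eq_zero hf (by omega), mul_zero]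

theorem psubst_add (f G H : PowerSeries K) :
    psubst f (G + H) = psubst f G + psubst f H := by
  ext n
  rw [map_add, coeff_psubst, coeff_psubst, coeff_psubst, ← Finset.sum_add_distrib]
  exact Finset.sum_congr rfl fun j _ => by rw [map_add, add_mul]

theorem coeff_qsmul (G : PowerSeries K) (c : ℚ) (n : ℕ) :
    coeff n (c • G) = c • coeff n G := rfl

theorem psubst_smul (f G : PowerSeries K) (c : ℚ) :
    psubst f (c • G) = c • psubst f G := by
  ext n
  rw [coeff_qsmul, coeff_psubst, coeff_psubst, Finset.smul_sum]
  exact Finset.sum_congr rfl fun j _ => by rw [coeff_qsmul, smul_mul_assoc]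

theorem psubst_C (f : PowerSeries K) (c : K) : psubst f (C c) = C c := by
  ext n
  rw [coeff_psubst, Finset.sum_eq_single 0]
  · simp [coeff_C, coeff_one]
  · intro j hj hj0
    rw [coeff_C, if_neg hj0, zero_mul]
  · simp

theorem psubst_one (f : PowerSeries K) : psubst f (1 : PowerSeries K) = 1 := by
  have := psubst_C f (1 : K); simpa using this

theorem psubst_X {f : PowerSeries K} (hf : constantCoeff f = 0) :
    psubst f (X : PowerSeries K) = f := by
  ext n
  rw [coeff_psubst, Finset.sum_eq_single 1]
  · simp
  · intro j hj hj1
    rw [coeff_X, if_neg hj1, zero_mul]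
  · intro h
    simp only [Finset.mem_range, not_lt] at h
    have hn0 : n = 0 := by omega
    subst hn0
    simp [hf]

theorem psubst_mul {f : PowerSeries K} (hf : constantCoeff f = 0) (G H : PowerSeries K) :
    psubst f (G * H) = psubst f G * psubst f H := by
  ext n
  have hFz : ∀ p : ℕ × ℕ, n < p.1 + p.2 →
      coeff p.1 G * coeff p.2 H * coeff n (f ^ (p.1 + p.2)) = 0 := fun p hp => by
    rw [coeff_pow_eq_zero hf hp, mul_zero]
  have tri_eq_box :
      ∑ x ∈ (Finset.range (n+1)).sigma (fun j => Finset.HasAntidiagonal.antidiagonal j),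
          (coeff x.2.1 G * coeff x.2.2 H * coeff n (f ^ (x.2.1 + x.2.2)))
      = ∑ p ∈ Finset.range (n+1) ×ˢ Finset.range (n+1),
          (coeff p.1 G * coeff p.2 H * coeff n (f ^ (p.1 + p.2))) := by
    rw [← Finset.sum_filter_add_sum_filter_not (Finset.range (n+1) ×ˢ Finset.range (n+1))
      (fun p => p.1 + p.2 ≤ n)]
    have h2 : ∑ p ∈ (Finset.range (n+1) ×ˢ Finset.range (n+1)).filter
        (fun p => ¬ p.1 + p.2 ≤ n),
        (coeff p.1 G * coeff p.2 H * coeff n (f ^ (p.1 + p.2))) = 0 := by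
      refine Finset.sum_eq_zero fun p hp => ?_
      simp only [Finset.mem_filter, not_le] at hp
      exact hFz p hp.2
    rw [h2, add_zero]
    refine Finset.sum_nbij' (fun x => (x.2.1, x.2.2)) (fun p => ⟨p.1 + p.2, p⟩) ?_ ?_ ?_ ?_ ?_
    · intro x hx
      simp only [Finset.mem_sigma, Finset.mem_range, Finset.HasAntidiagonal.mem_antidiagonal] at hx
      simp only [Finset.mem_filter, Finset.mem_product, Finset.mem_range]
      omega
    · intro p hp
      simp only [Finset.mem_filter, Finset.mem_product, Finset.mem_range] at hp
      simp only [Finset.mem_sigma, Finset.mem_range, Finset.HasAntidiagonal.mem_antidiagonal]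
      exact ⟨by omega, by simp⟩
    · intro x hx
      simp only [Finset.mem_sigma, Finset.HasAntidiagonal.mem_antidiagonal] at hx
      simp [hx.2]
    · intro p hp; rfl
    · intro x hx; rfl
  rw [coeff_psubst, coeff_mul]
  calc ∑ j ∈ Finset.range (n + 1), coeff j (G * H) * coeff n (f ^ j)
      = ∑ x ∈ (Finset.range (n+1)).sigma (fun j => Finset.HasAntidiagonal.antidiagonal j),
          (coeff x.2.1 G * coeff x.2.2 H * coeff n (f ^ (x.2.1 + x.2.2))) := by
        rw [Finset.sum_sigma]
        refine Finset.sum_congr rfl fun j hj => ?_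
        rw [coeff_mul, Finset.sum_mul]
        refine Finset.sum_congr rfl fun p hp => ?_
        rw [(Finset.HasAntidiagonal.mem_antidiagonal.mp hp)]
    _ = ∑ p ∈ Finset.range (n+1) ×ˢ Finset.range (n+1),
          (coeff p.1 G * coeff p.2 H * coeff n (f ^ (p.1 + p.2))) := tri_eq_box
    _ = ∑ a ∈ Finset.range (n+1), ∑ b ∈ Finset.range (n+1),
          (coeff a G * coeff b H * coeff n (f ^ (a + b))) := by
        rw [← Finset.sum_product']
    _ = ∑ p ∈ Finset.HasAntidiagonal.antidiagonal n,
          coeff p.1 (psubst f G) * coeff p.2 (psubst f H) := by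
        have e1 : ∀ p ∈ Finset.HasAntidiagonal.antidiagonal n,
            coeff p.1 (psubst f G) * coeff p.2 (psubst f H)
            = ∑ a ∈ Finset.range (n+1), ∑ b ∈ Finset.range (n+1),
                coeff a G * coeff b H * (coeff p.1 (f ^ a) * coeff p.2 (f ^ b)) := by
          intro p hp
          have hp' := Finset.HasAntidiagonal.mem_antidiagonal.mp hp
          rw [coeff_psubst' hf G (show p.1 < n+1 by omega),
            coeff_psubst' hf H (show p.2 < n+1 by omega), Finset.sum_mul_sum]
          exact Finset.sum_congr rfl fun a _ => Finset.sum_congr rfl fun b _ => by ring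
        rw [Finset.sum_congr rfl e1]
        conv_rhs => rw [Finset.sum_comm]
        refine Finset.sum_congr rfl fun a _ => ?_
        conv_rhs => rw [Finset.sum_comm]
        refine Finset.sum_congr rfl fun b _ => ?_
        rw [← Finset.mul_sum, ← coeff_mul, ← pow_add]

theorem psubst_pow {f : PowerSeries K} (hf : constantCoeff f = 0) (G : PowerSeries K)
    (k : ℕ) : psubst f (G ^ k) = (psubst f G) ^ k := by
  induction k with
  | zero => rw [pow_zero, pow_zero]; exact psubst_one f
  | succ k ih => rw [pow_succ, psubst_mul hf, ih, pow_succ]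

theorem deriv_pow_succ (f : PowerSeries K) (b : ℕ) :
    d⁄dX K (f ^ (b+1)) = (b+1 : ℕ) • (f ^ b * d⁄dX K f) := by
  induction b with
  | zero => simp
  | succ b ih =>
    rw [pow_succ, Derivation.leibniz, ih, pow_succ]
    simp only [smul_eq_mul, nsmul_eq_mul]
    push_cast
    ring

theorem psubst_deriv {f : PowerSeries K} (hf : constantCoeff f = 0) (G : PowerSeries K) :
    d⁄dX K (psubst f G) = d⁄dX K f * psubst f (d⁄dX K G) := by
  ext n
  rw [coeff_derivative, coeff_psubst' hf G (show n+1 < n+2 by omega), Finset.sum_mul,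
    coeff_mul]
  have rhs : ∑ p ∈ Finset.HasAntidiagonal.antidiagonal n, coeff p.1 (d⁄dX K f) * coeff p.2 (psubst f (d⁄dX K G))
      = ∑ b ∈ Finset.range (n+1), coeff b (d⁄dX K G) * coeff n (f ^ b * d⁄dX K f) := by
    have e1 : ∀ p ∈ Finset.HasAntidiagonal.antidiagonal n,
        coeff p.1 (d⁄dX K f) * coeff p.2 (psubst f (d⁄dX K G))
        = ∑ b ∈ Finset.range (n+1), coeff b (d⁄dX K G)
            * (coeff p.2 (f ^ b) * coeff p.1 (d⁄dX K f)) := by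
      intro p hp
      have hp' := Finset.HasAntidiagonal.mem_antidiagonal.mp hp
      rw [coeff_psubst' hf _ (show p.2 < n+1 by omega), Finset.mul_sum]
      exact Finset.sum_congr rfl fun b _ => by ring
    rw [Finset.sum_congr rfl e1, Finset.sum_comm]
    refine Finset.sum_congr rfl fun b _ => ?_
    rw [← Finset.mul_sum]
    congr 1
    rw [coeff_mul]
    exact Finset.Nat.sum_antidiagonal_swap (f := fun p => coeff p.1 (f ^ b) * coeff p.2 (d⁄dX K f))
  rw [rhs, Finset.sum_range_succ']
  have h0 : coeff 0 G * coeff (n+1) (f ^ 0) * (↑n + 1) = 0 := by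
    simp [coeff_one, Nat.succ_ne_zero]
  rw [h0, add_zero]
  refine Finset.sum_congr rfl fun b _ => ?_
  rw [coeff_derivative]
  have key : coeff (n+1) (f ^ (b+1)) * (n+1 : K) = (b+1 : K) * coeff n (f ^ b * d⁄dX K f) := by
    have hD := congrArg (coeff n) (deriv_pow_succ f b)
    rw [coeff_derivative, map_nsmul, nsmul_eq_mul] at hD
    push_cast at hD ⊢
    linear_combination hD
  linear_combination (coeff (b+1) G) * key

theorem psubst_sub (f G H : PowerSeries K) :
    psubst f (G - H) = psubst f G - psubst f H := by
  ext n
  rw [map_sub, coeff_psubst, coeff_psubst, coeff_psubst, ← Finset.sum_sub_distrib]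
  exact Finset.sum_congr rfl fun j _ => by rw [map_sub, sub_mul]

theorem psubst_neg_one (f : PowerSeries K) :
    psubst f (-1 : PowerSeries K) = -1 := by
  have h := psubst_C f (-1)
  rwa [map_neg, map_one] at h

theorem constantCoeff_logOneSub : constantCoeff (R := K) (logOneSub) = 0 := by
  rw [← coeff_zero_eq_constantCoeff_apply]
  simp [logOneSub]

theorem natCast_unit (n : ℕ) : ((n+1 : ℕ) : K) * algebraMap ℚ K (1/(n+1 : ℚ)) = 1 := by
  have : ((n+1 : ℕ) : K) = algebraMap ℚ K ((n+1 : ℕ) : ℚ) := by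
    rw [map_natCast]
  rw [this, ← map_mul]
  rw [show ((n+1 : ℕ) : ℚ) * (1/(n+1:ℚ)) = 1 by
    push_cast; field_simp]
  exact map_one _

theorem deriv_ext {g₁ g₂ : PowerSeries K} (h0 : constantCoeff g₁ = constantCoeff g₂)
    (hD : d⁄dX K g₁ = d⁄dX K g₂) : g₁ = g₂ := by
  ext n
  cases n with
  | zero => simpa [coeff_zero_eq_constantCoeff] using h0
  | succ n =>
    have := congrArg (coeff n) hD
    rw [coeff_derivative, coeff_derivative] at this
    have h2 := congrArg (· * algebraMap ℚ K (1/(n+1:ℚ))) this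
    simp only [mul_assoc] at h2
    rwa [show ((n:K)+1) = ((n+1 : ℕ) : K) by push_cast; ring, natCast_unit, mul_one, mul_one] at h2

theorem oneSubX_mul_derivLog :
    (1 - X : PowerSeries K) * d⁄dX K logOneSub = -1 := by
  have hD : ∀ n : ℕ, coeff n (d⁄dX K (logOneSub (K := K))) = -1 := by
    intro n
    rw [coeff_derivative]
    have h1 : coeff (n+1) (logOneSub (K:=K)) = algebraMap ℚ K (-(1/((n+1:ℕ):ℚ))) := by
      simp [logOneSub]
    rw [h1, show ((n:K)+1) = algebraMap ℚ K ((n+1:ℕ):ℚ) by rw [map_natCast]; push_cast; ring,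
      ← map_mul, show (-(1/((n+1:ℕ):ℚ))) * ((n+1:ℕ):ℚ) = -1 by field_simp, map_neg, map_one]
  ext n
  rw [sub_mul, one_mul, map_sub]
  cases n with
  | zero => simp [hD 0, coeff_zero_X_mul]
  | succ n => simp [hD, coeff_succ_X_mul]

theorem isUnit_oneSubX : IsUnit (1 - X : PowerSeries K) := by
  rw [PowerSeries.isUnit_iff_constantCoeff]
  simp

theorem constantCoeff_oneSubPow (k : ℕ) :
    constantCoeff (R := K) (1 - (1 - X) ^ k) = 0 := by
  rw [map_sub, map_pow, map_sub]
  simp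

theorem coeff_zero_psubst {f G : PowerSeries K} (hf : constantCoeff f = 0) :
    constantCoeff (psubst f G) = constantCoeff G := by
  rw [← coeff_zero_eq_constantCoeff_apply, coeff_psubst]
  simp [coeff_zero_eq_constantCoeff_apply, hf]

/-- `log((1-x)^k) = k log(1-x)` -/

theorem psubst_oneSubPow_log (k : ℕ) :
    psubst (1 - (1 - X) ^ k) (logOneSub (K := K)) = (k : K) • logOneSub := by
  cases k with
  | zero =>
    have : (1 - (1-X)^0 : PowerSeries K) = 0 := by simp
    rw [this]
    ext n
    rw [coeff_psubst]
    have : ∀ j ∈ Finset.range (n+1), coeff j (logOneSub (K := K)) * coeff n ((0:K⟦X⟧) ^ j) = 0 := by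
      intro j hj
      rcases Nat.eq_zero_or_pos j with h | h
      · subst h
        have : coeff 0 (logOneSub (K := K)) = 0 := by simp [logOneSub]
        rw [this, zero_mul]
      · rw [zero_pow (by omega), map_zero, mul_zero]
    rw [Finset.sum_eq_zero this]
    simp
  | succ j =>
    set f : PowerSeries K := 1 - (1 - X) ^ (j+1) with hfdef
    have hf : constantCoeff f = 0 := constantCoeff_oneSubPow (j+1)
    -- P := psubst f (d/dX logOneSub) satisfies (1-X)^(j+1) * P = -1
    set P := psubst f (d⁄dX K (logOneSub (K := K))) with hP
    have hmain : (1 - X : K⟦X⟧) ^ (j+1) * P = -1 := by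
      have h1 : psubst f ((1 - X) * d⁄dX K (logOneSub (K := K))) = psubst f (-1) :=
        congrArg _ oneSubX_mul_derivLog
      rw [psubst_mul hf, psubst_neg_one, psubst_sub, psubst_one, psubst_X hf] at h1
      rw [show (1 : K⟦X⟧) - f = (1 - X)^(j+1) by rw [hfdef]; ring] at h1
      exact h1
    have hPD : (1 - X : K⟦X⟧) ^ j * P = d⁄dX K (logOneSub (K := K)) := by
      have h2 : (1 - X : K⟦X⟧) * ((1 - X)^j * P)
          = (1 - X) * d⁄dX K (logOneSub (K := K)) := by
        rw [← mul_assoc, ← pow_succ', hmain, oneSubX_mul_derivLog]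
      exact isUnit_oneSubX.mul_left_cancel h2
    apply deriv_ext
    · rw [coeff_zero_psubst hf, constantCoeff_logOneSub]
      have hr : constantCoeff (((j+1:ℕ):K) • logOneSub (K:=K))
          = ((j+1:ℕ):K) * constantCoeff (logOneSub (K:=K)) := rfl
      rw [hr, constantCoeff_logOneSub, mul_zero]
    · rw [psubst_deriv hf, Derivation.map_smul]
      have hDf : d⁄dX K f = ((j+1 : ℕ) • ((1 - X : K⟦X⟧)^j)) := by
        rw [hfdef, map_sub, deriv_pow_succ]
        simp [smul_eq_mul, mul_comm]
      rw [hDf, ← hP, smul_mul_assoc, hPD]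
      rw [nsmul_eq_mul]
      push_cast
      rw [smul_eq_C_mul, map_add, map_one, map_natCast]

theorem derivExp : d⁄dX K (PowerSeries.exp K) = PowerSeries.exp K := by
  ext n
  rw [coeff_derivative, PowerSeries.coeff_exp, PowerSeries.coeff_exp]
  rw [show ((n:K)+1) = algebraMap ℚ K ((n+1:ℕ):ℚ) by rw [map_natCast]; push_cast; ring,
    ← map_mul]
  congr 1
  rw [Nat.factorial_succ]
  push_cast
  have h1 : ((n:ℚ)+1) ≠ 0 := by positivity
  have h2 : ((n.factorial :ℚ)) ≠ 0 := by
    exact_mod_cast Nat.cast_ne_zero.mpr (Nat.factorial_ne_zero n)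
  field_simp

theorem mul_natSucc_eq_zero {a : K} {n : ℕ} (h : a * ((n:K)+1) = 0) : a = 0 := by
  have key : ((n:K)+1) * algebraMap ℚ K (1/((n:ℚ)+1)) = 1 := by
    have hcast : ((n:K)+1) = algebraMap ℚ K ((n:ℚ)+1) := by
      rw [map_add, map_natCast, map_one]
    rw [hcast, ← map_mul, show ((n:ℚ)+1)*(1/((n:ℚ)+1)) = 1 by
      have : ((n:ℚ)+1) ≠ 0 := by positivity
      field_simp, map_one]
  have h2 := congrArg (· * algebraMap ℚ K (1/((n:ℚ)+1))) h
  simp only [mul_assoc, zero_mul] at h2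
  rwa [key, mul_one] at h2

theorem constantCoeff_oneSubExp : constantCoeff (1 - PowerSeries.exp K) = 0 := by
  rw [map_sub, PowerSeries.constantCoeff_exp, map_one, sub_self]

/-- `log(e^y) = y`, in the form `logOneSub ∘ (1 - exp) = X`. -/

theorem psubst_oneSubExp_log :
    psubst (1 - PowerSeries.exp K) (logOneSub (K := K)) = X := by
  set u : PowerSeries K := 1 - PowerSeries.exp K with hu
  have hcu : constantCoeff u = 0 := constantCoeff_oneSubExp
  apply deriv_ext
  · rw [coeff_zero_psubst hcu, constantCoeff_logOneSub, constantCoeff_X]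
  · rw [psubst_deriv hcu, derivative_X]
    have hmain : PowerSeries.exp K * psubst u (d⁄dX K (logOneSub (K := K))) = -1 := by
      have h1 : psubst u ((1 - X) * d⁄dX K (logOneSub (K := K))) = psubst u (-1) :=
        congrArg _ oneSubX_mul_derivLog
      rw [psubst_mul hcu, psubst_neg_one, psubst_sub, psubst_one, psubst_X hcu] at h1
      rw [show (1 : K⟦X⟧) - u = PowerSeries.exp K by rw [hu]; ring] at h1
      exact h1
    have hDu : d⁄dX K u = -PowerSeries.exp K := by
      rw [hu, map_sub, derivExp, Derivation.map_one_eq_zero, zero_sub]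
    rw [hDu, neg_mul, hmain, neg_neg]

/-- `exp(log(1-x)) = 1 - x`. -/

theorem psubst_log_exp :
    psubst (logOneSub (K := K)) (PowerSeries.exp K) = 1 - X := by
  set L : PowerSeries K := logOneSub with hL
  have hcL : constantCoeff L = 0 := constantCoeff_logOneSub
  set g : PowerSeries K := psubst L (PowerSeries.exp K) with hg
  set h : PowerSeries K := g - (1 - X) with hh
  have hODE : (1 - X : K⟦X⟧) * d⁄dX K g = -g := by
    rw [hg, psubst_deriv hcL, derivExp, ← mul_assoc, oneSubX_mul_derivLog, neg_one_mul]
  have h0 : constantCoeff h = 0 := by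
    rw [hh, map_sub, hg, coeff_zero_psubst hcL, PowerSeries.constantCoeff_exp]
    simp
  have hODEh : (1 - X : K⟦X⟧) * d⁄dX K h = -h := by
    have hd : d⁄dX K ((1:K⟦X⟧) - X) = -1 := by
      rw [map_sub, derivative_X, Derivation.map_one_eq_zero, zero_sub]
    rw [hh, map_sub, mul_sub, hODE, hd, mul_neg, mul_one]
    ring
  have hzero : ∀ n, coeff n h = 0 := by
    intro n
    induction n using Nat.strong_induction_on with
    | _ n ih =>
      cases n with
      | zero => simpa [coeff_zero_eq_constantCoeff] using h0
      | succ n =>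
        have hc := congrArg (coeff n) hODEh
        rw [sub_mul, one_mul, map_sub, map_neg, coeff_derivative] at hc
        have hXterm : coeff n (X * d⁄dX K h) = (if n = 0 then 0 else coeff n h * (n:K)) := by
          cases n with
          | zero => simp [coeff_zero_X_mul]
          | succ m =>
            rw [coeff_succ_X_mul, coeff_derivative, if_neg (Nat.succ_ne_zero m)]
            push_cast
            ring_nf
        rw [hXterm] at hc
        cases n with
        | zero =>
          simp only [if_pos rfl, sub_zero] at hc
          have hh0 : coeff 0 h = 0 := by simpa [coeff_zero_eq_constantCoeff] using h0
          rw [hh0, neg_zero] at hc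
          simp only [if_true, sub_zero] at hc
          exact mul_natSucc_eq_zero hc
        | succ m =>
          rw [if_neg (Nat.succ_ne_zero m), ih (m+1) (by omega), zero_mul, sub_zero, neg_zero] at hc
          exact mul_natSucc_eq_zero hc
  have : h = 0 := by ext n; simpa using hzero n
  have := sub_eq_zero.mp (hh ▸ this)
  exact this

theorem psubst_lg (k n : ℕ) :
    psubst (1 - (1 - X) ^ k) (lg (K := K) n) = ((k:K)^n) • lg (K := K) n := by
  unfold lg
  rw [psubst_smul, psubst_pow (constantCoeff_oneSubPow k), psubst_oneSubPow_log, smul_pow,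
    smul_comm]

theorem psubst_u_lg (m : ℕ) :
    psubst (1 - PowerSeries.exp K) (lg (K := K) m)
      = ((m.factorial : ℚ)⁻¹) • (X : K⟦X⟧) ^ m := by
  unfold lg
  rw [psubst_smul, psubst_pow constantCoeff_oneSubExp, psubst_oneSubExp_log]

noncomputable def cc (K : Type*) [CommRing K] [Algebra ℚ K] (i n : ℕ) : K :=
  ∑ k ∈ Finset.range (i+1), (i.choose k : K) * (-1:K)^(i+k) * (k:K)^n

theorem coeff_u_pow (i n : ℕ) :
    coeff n ((1 - PowerSeries.exp K) ^ i)
      = (-1:K)^i * cc K i n * algebraMap ℚ K (1/(n.factorial : ℚ)) := by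
  rw [sub_pow, map_sum]
  have term_eq : ∀ m ∈ Finset.range (i+1),
      coeff n ((-1:K⟦X⟧)^(m+i) * 1^m * (PowerSeries.exp K)^(i-m) * (i.choose m : K⟦X⟧))
      = ((-1:K)^(m+i) * (i.choose m : K)) * ((((i-m:ℕ)):K)^n * algebraMap ℚ K (1/(n.factorial : ℚ))) := by
    intro m hm
    have h1 : ((-1:K⟦X⟧)^(m+i) * 1^m * (PowerSeries.exp K)^(i-m) * (i.choose m : K⟦X⟧))
        = C ((-1:K)^(m+i) * (i.choose m : K)) * (PowerSeries.exp K)^(i-m) := by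
      rw [one_pow, mul_one]
      rw [map_mul, map_pow, map_neg, map_one, map_natCast]
      ring
    rw [h1, coeff_C_mul, exp_pow_eq_rescale_exp, coeff_rescale, coeff_exp]
  rw [Finset.sum_congr rfl term_eq, ← Finset.sum_range_reflect]
  trans (∑ k ∈ Finset.range (i+1),
      ((-1:K)^i * ((i.choose k : K) * (-1:K)^(i+k) * (k:K)^n)) * algebraMap ℚ K (1/(n.factorial : ℚ)))
  · refine Finset.sum_congr rfl ?_
    intro k hk
    simp only [Finset.mem_range] at hk
    have hk' : k ≤ i := by omega
    have e1 : i + 1 - 1 - k = i - k := by omega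
    have e2 : i - (i - k) = k := by omega
    rw [e1, e2, Nat.choose_symm hk']
    have hsign : (-1:K)^(i-k+i) = (-1:K)^i * (-1:K)^(i+k) := by
      have h2 : (-1:K)^(i-k+i) * (-1:K)^(2*k) = (-1:K)^i * (-1:K)^(i+k) := by
        rw [← pow_add, ← pow_add]; congr 1; omega
      have h3 : (-1:K)^(2*k) = 1 := by
        rw [pow_mul]; norm_num
      rw [h3, mul_one] at h2
      exact h2
    rw [hsign]
    ring
  · rw [← Finset.sum_mul, ← Finset.mul_sum]
    rfl

theorem cc_eq_zero {i n : ℕ} (h : n < i) : cc K i n = 0 := by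
  have h1 := coeff_u_pow (K := K) i n
  rw [coeff_pow_eq_zero constantCoeff_oneSubExp h] at h1
  have hu : IsUnit ((-1:K)^i * algebraMap ℚ K (1/(n.factorial : ℚ))) := by
    apply IsUnit.mul
    · exact (IsUnit.neg isUnit_one).pow i
    · apply IsUnit.map
      apply IsUnit.of_mul_eq_one ((n.factorial : ℚ))
      have : (n.factorial : ℚ) ≠ 0 := Nat.cast_ne_zero.mpr (Nat.factorial_ne_zero n)
      field_simp
  have h2 : cc K i n * ((-1:K)^i * algebraMap ℚ K (1/(n.factorial : ℚ)))
      = 0 * ((-1:K)^i * algebraMap ℚ K (1/(n.factorial : ℚ))) := by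
    rw [zero_mul]; linear_combination -h1
  exact hu.mul_right_cancel h2

theorem cc_zero_left (n : ℕ) : cc K 0 n = if n = 0 then 1 else 0 := by
  unfold cc
  cases n with
  | zero => norm_num
  | succ n => norm_num

theorem constantCoeff_lg (m : ℕ) :
    constantCoeff (lg (K := K) m) = if m = 0 then 1 else 0 := by
  unfold lg
  have hsm : constantCoeff (((m.factorial : ℚ)⁻¹) • (logOneSub (K := K)) ^ m)
      = ((m.factorial : ℚ)⁻¹) • constantCoeff ((logOneSub (K := K)) ^ m) := rfl
  rw [hsm, map_pow]
  cases m with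
  | zero => norm_num
  | succ m =>
    rw [constantCoeff_logOneSub, zero_pow (Nat.succ_ne_zero m), smul_zero,
      if_neg (Nat.succ_ne_zero m)]

theorem coeff_lg_eq_zero {N n : ℕ} (h : N < n) : coeff N (lg (K := K) n) = 0 := by
  unfold lg
  rw [coeff_qsmul, coeff_pow_eq_zero constantCoeff_logOneSub h, smul_zero]

theorem lg_zero : lg (K := K) 0 = 1 := by
  unfold lg
  norm_num

theorem alg_factorial_unit (n : ℕ) : IsUnit (algebraMap ℚ K (1/(n.factorial : ℚ))) := by
  apply IsUnit.map
  apply IsUnit.of_mul_eq_one ((n.factorial : ℚ))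
  have : (n.factorial : ℚ) ≠ 0 := Nat.cast_ne_zero.mpr (Nat.factorial_ne_zero n)
  field_simp

/-- The key scalar orthogonality identity. -/

theorem scalar_identity (n m : ℕ) :
    ∑ i ∈ Finset.range (n+1), (-1:K)^i * coeff i (lg (K := K) m) * cc K i n
      = if n = m then 1 else 0 := by
  have h := congrArg (coeff n) (psubst_u_lg (K := K) m)
  rw [coeff_psubst, coeff_qsmul] at h
  have hL : ∑ j ∈ Finset.range (n + 1),
      coeff j (lg (K := K) m) * coeff n ((1 - PowerSeries.exp K) ^ j)
      = (∑ i ∈ Finset.range (n+1), (-1:K)^i * coeff i (lg (K := K) m) * cc K i n)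
        * algebraMap ℚ K (1/(n.factorial : ℚ)) := by
    rw [Finset.sum_mul]
    refine Finset.sum_congr rfl fun j _ => ?_
    rw [coeff_u_pow]
    ring
  rw [hL] at h
  have hR : ((m.factorial : ℚ)⁻¹) • coeff n ((X : K⟦X⟧) ^ m)
      = (if n = m then (1:K) else 0) * algebraMap ℚ K (1/(n.factorial : ℚ)) := by
    rw [coeff_X_pow]
    by_cases hnm : n = m
    · subst hnm
      rw [Algebra.smul_def]
      simp [one_div]
    · simp [hnm]
  rw [hR] at h
  exact (alg_factorial_unit n).mul_right_cancel h

theorem diag_lg (i n : ℕ) :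
    diagPartialDeriv i (lg (K := K) n) = cc K i n • lg (K := K) n := by
  unfold diagPartialDeriv
  have step1 : ∀ I : Finset (Fin i),
      ((-1 : ℤ) ^ (i + I.card)) • psubst (1 - (1 - PowerSeries.X) ^ I.card) (lg (K := K) n)
      = ((-1:K)^(i + I.card) * (I.card : K)^n) • lg (K := K) n := by
    intro I
    rw [psubst_lg]
    rw [← Int.cast_smul_eq_zsmul K ((-1 : ℤ) ^ (i + I.card)), smul_smul]
    push_cast
    ring_nf
  rw [Finset.sum_congr rfl (fun I _ => step1 I), ← Finset.sum_smul]
  congr 1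
  -- group subsets by cardinality
  rw [← Finset.powerset_univ, Finset.sum_powerset]
  rw [Finset.card_univ, Fintype.card_fin]
  unfold cc
  refine Finset.sum_congr rfl fun j hj => ?_
  have hconst : ∀ I ∈ Finset.powersetCard j (Finset.univ : Finset (Fin i)),
      ((-1:K)^(i + I.card) * (I.card : K)^n) = ((-1:K)^(i + j) * (j : K)^n) := by
    intro I hI
    rw [(Finset.mem_powersetCard.mp hI).2]
  rw [Finset.sum_congr rfl hconst, Finset.sum_const, Finset.card_powersetCard,
    Finset.card_univ, Fintype.card_fin, nsmul_eq_mul]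
  ring

theorem compose_lg (n m : ℕ) :
    compose (lg (K := K) n) (lg (K := K) m) = if n = m then lg (K := K) n else 0 := by
  ext N
  rw [compose, map_add, coeff_C, coeff_mk]
  have hterm : ∀ i ∈ Finset.range (N+1),
      ((-1 : ℤ) ^ (i + 1)) •
        (coeff (i + 1) (lg (K := K) m) * coeff N (diagPartialDeriv (i + 1) (lg (K := K) n)))
      = ((-1:K)^(i+1) * coeff (i+1) (lg (K := K) m) * cc K (i+1) n) * coeff N (lg (K := K) n) := by
    intro i _
    rw [diag_lg, map_smul, smul_eq_mul,
      ← Int.cast_smul_eq_zsmul K ((-1 : ℤ) ^ (i + 1)), smul_eq_mul]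
    push_cast
    ring
  rw [Finset.sum_congr rfl hterm, ← Finset.sum_mul]
  -- evaluate the scalar sum
  have hg0 : (-1:K)^0 * coeff 0 (lg (K := K) m) * cc K 0 n
      = (if n = 0 then (1:K) else 0) * (if m = 0 then (1:K) else 0) := by
    rw [pow_zero, one_mul, coeff_zero_eq_constantCoeff_apply, constantCoeff_lg, cc_zero_left]
    ring
  have hSSn : ∑ i ∈ Finset.range n, (-1:K)^(i+1) * coeff (i+1) (lg (K := K) m) * cc K (i+1) n
      = (if n = m then (1:K) else 0)
        - (if n = 0 then (1:K) else 0) * (if m = 0 then (1:K) else 0) := by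
    have h := scalar_identity (K := K) n m
    rw [Finset.sum_range_succ'] at h
    rw [hg0] at h
    linear_combination h
  by_cases hnN : n ≤ N + 1
  · have hSS : ∑ i ∈ Finset.range (N+1),
        (-1:K)^(i+1) * coeff (i+1) (lg (K := K) m) * cc K (i+1) n
        = ∑ i ∈ Finset.range n, (-1:K)^(i+1) * coeff (i+1) (lg (K := K) m) * cc K (i+1) n := by
      symm
      apply Finset.sum_subset
      · intro i hi; simp only [Finset.mem_range] at *; omega
      · intro i hi hni
        simp only [Finset.mem_range] at *
        rw [cc_eq_zero (show n < i + 1 by omega), mul_zero]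
    rw [hSS, hSSn]
    by_cases hn0 : n = 0
    · subst hn0
      by_cases hm0 : m = 0
      · subst hm0
        simp [lg_zero, coeff_one, coeff_zero_eq_constantCoeff_apply]
      · have h1 : coeff 0 (lg (K := K) m) = 0 := by
          rw [coeff_zero_eq_constantCoeff_apply, constantCoeff_lg, if_neg hm0]
        simp [h1, hm0, Ne.symm hm0]
    · have hq : (if N = 0 then coeff 0 (lg (K := K) m) * constantCoeff (lg (K := K) n) else 0) = 0 := by
        rw [coeff_zero_eq_constantCoeff_apply, constantCoeff_lg, constantCoeff_lg, if_neg hn0]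
        simp
      rw [hq, zero_add, if_neg hn0, zero_mul, sub_zero]
      by_cases hnm : n = m
      · subst hnm; simp
      · simp [hnm]
  · -- n > N + 1, so N < n
    have hN : N < n := by omega
    have hn0 : n ≠ 0 := by omega
    rw [coeff_lg_eq_zero hN, mul_zero]
    have hq : (if N = 0 then coeff 0 (lg (K := K) m) * constantCoeff (lg (K := K) n) else 0) = 0 := by
      rw [coeff_zero_eq_constantCoeff_apply, constantCoeff_lg, constantCoeff_lg, if_neg hn0]
      simp
    rw [hq, zero_add]
    by_cases hnm : n = m
    · subst hnm; rw [if_pos rfl, coeff_lg_eq_zero hN]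
    · rw [if_neg hnm, map_zero]

theorem sum_lg (N : ℕ) :
    coeff N (1 - X : K⟦X⟧) = ∑ r ∈ Finset.range (N + 1), coeff N (lg (K := K) r) := by
  have h := congrArg (coeff N) (psubst_log_exp (K := K))
  rw [coeff_psubst] at h
  rw [← h]
  refine Finset.sum_congr rfl fun r _ => ?_
  rw [coeff_exp]
  unfold lg
  rw [coeff_qsmul, Algebra.smul_def, one_div]

end Aux

/-- The series `lg_n(x)` are orthogonal idempotents for the composition product, and they
partition the identity `1 - x` (an identity of power series, stated coefficientwise:
the `N`-th coefficient of `∑_{r≥0} lg_r` involves only the terms with `r ≤ N`). -/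

theorem lg_orthogonal_idempotents :
    (∀ n m : ℕ, compose (lg (K := K) n) (lg (K := K) m)
        = if n = m then lg (K := K) n else 0) ∧
    (∀ N : ℕ, PowerSeries.coeff N (1 - PowerSeries.X)
        = ∑ r ∈ Finset.range (N + 1), PowerSeries.coeff N (lg (K := K) r)) := by
  exact ⟨fun n m => compose_lg n m, fun N => sum_lg N⟩
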